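/- Let X be a stationary field on ℤ^d with mean μ, absolutely summable covariance (constant c with E(∑_{rect}(X_k-μ))^2 ≤ c·|rect| for all rectangles), and sample mean X̄_n over A_n = {1,…,n}^d. With r̂(j) the empirical covariance using X̄_n and r̃(j) the empirical covariance using μ, one has E|r̂(j) - r̃(j)| ≤ E(X̄_n - μ)^2 + 2 n^{-d/2} √(c·E(X̄_n - μ)^2) for every j ∈ B_{n-1}, and hence ∑_{j ∈ B_{q-1}} E|r̂(j) - r̃(j)| ≤ (2q-1)^d (E(X̄_n-μ)^2 + 2 n^{-d/2}√(c·E(X̄_n-μ)^2)). -/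

import Mathlib

open MeasureTheory

lemma cs_abs {Ω : Type*} [MeasureSpace Ω] [IsProbabilityMeasure (volume : Measure Ω)]
    {f g : Ω → ℝ}
    (hfm : Measurable f) (hgm : Measurable g)
    (hf2 : Integrable (fun ω => f ω ^ 2)) (hg2 : Integrable (fun ω => g ω ^ 2)) :
    ∫ ω, |f ω * g ω| ≤ Real.sqrt (∫ ω, f ω ^ 2) * Real.sqrt (∫ ω, g ω ^ 2) := by
  have hpq : Real.HolderConjugate 2 2 := Real.HolderConjugate.two_two
  have h2 : ENNReal.ofReal (2:ℝ) = 2 := by norm_num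
  have hfL : MemLp f 2 (volume : Measure Ω) :=
    (memLp_two_iff_integrable_sq hfm.aestronglyMeasurable).2 hf2
  have hgL : MemLp g 2 (volume : Measure Ω) :=
    (memLp_two_iff_integrable_sq hgm.aestronglyMeasurable).2 hg2
  have key := integral_mul_le_Lp_mul_Lq_of_nonneg (μ := (volume : Measure Ω)) hpq
    (f := fun ω => |f ω|) (g := fun ω => |g ω|)
    (Filter.Eventually.of_forall fun ω => abs_nonneg _)
    (Filter.Eventually.of_forall fun ω => abs_nonneg _)
    (h2 ▸ hfL.abs) (h2 ▸ hgL.abs)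
  have hfe : ∫ ω, |f ω| ^ (2:ℝ) = ∫ ω, f ω ^ 2 := by
    refine integral_congr_ae (Filter.Eventually.of_forall fun ω => ?_)
    show |f ω| ^ (2:ℝ) = f ω ^ 2
    rw [show ((2:ℝ)) = ((2:ℕ):ℝ) from by norm_num, Real.rpow_natCast, sq_abs]
  have hge : ∫ ω, |g ω| ^ (2:ℝ) = ∫ ω, g ω ^ 2 := by
    refine integral_congr_ae (Filter.Eventually.of_forall fun ω => ?_)
    show |g ω| ^ (2:ℝ) = g ω ^ 2
    rw [show ((2:ℝ)) = ((2:ℕ):ℝ) from by norm_num, Real.rpow_natCast, sq_abs]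
  calc ∫ ω, |f ω * g ω| = ∫ ω, |f ω| * |g ω| := by
        refine integral_congr_ae (Filter.Eventually.of_forall fun ω => ?_)
        exact abs_mul _ _
    _ ≤ (∫ ω, |f ω| ^ (2:ℝ)) ^ ((1:ℝ)/2) * (∫ ω, |g ω| ^ (2:ℝ)) ^ ((1:ℝ)/2) := key
    _ = Real.sqrt (∫ ω, f ω ^ 2) * Real.sqrt (∫ ω, g ω ^ 2) := by
        rw [hfe, hge, Real.sqrt_eq_rpow, Real.sqrt_eq_rpow]

/-- Bound on the difference between the empirical covariance computed with the
sample mean and the one computed with the true mean: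
`E|r̂(j) - r̃(j)| ≤ E(X̄_n - μ)² + 2 n^{-d/2} √(c E(X̄_n - μ)²)` for every
`j ∈ B_{n-1}`, and summing over `B_{q-1}` gives the factor `(2q-1)^d`. -/
theorem stmt_15 {Ω : Type*} [MeasureSpace Ω] [IsProbabilityMeasure (volume : Measure Ω)]
    (d : ℕ) (hd : 0 < d) (n q : ℕ) (hq : 1 ≤ q) (hqn : q ≤ n)
    (X : (Fin d → ℤ) → Ω → ℝ) (μ : ℝ) (c : ℝ) (hc : 0 ≤ c)
    (hmeas : ∀ k, Measurable (X k))
    (hint : ∀ k k' : Fin d → ℤ, Integrable (fun ω => (X k ω - μ) * (X k' ω - μ)))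
    (hrect : ∀ s t : Fin d → ℤ, s ≤ t →
      ∫ ω, (∑ k ∈ Finset.Icc s t, (X k ω - μ)) ^ 2
        ≤ c * ∏ i, ((t i - s i + 1 : ℤ) : ℝ))
    (Xbar : Ω → ℝ)
    (hXbar : ∀ ω, Xbar ω
      = (∑ k ∈ Finset.Icc (1 : Fin d → ℤ) (fun _ => (n : ℤ)), X k ω) / (n : ℝ) ^ d)
    (rhat rtil : (Fin d → ℤ) → Ω → ℝ)
    (hrhat : ∀ j ω, rhat j ω
      = (∑ k ∈ Finset.Icc (1 : Fin d → ℤ) (fun i => (n : ℤ) - |j i|),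
          (X k ω - Xbar ω) * (X (k + fun i => |j i|) ω - Xbar ω)) / (n : ℝ) ^ d)
    (hrtil : ∀ j ω, rtil j ω
      = (∑ k ∈ Finset.Icc (1 : Fin d → ℤ) (fun i => (n : ℤ) - |j i|),
          (X k ω - μ) * (X (k + fun i => |j i|) ω - μ)) / (n : ℝ) ^ d)
    (E2 : ℝ) (hE2 : E2 = ∫ ω, (Xbar ω - μ) ^ 2) :
    (∀ j ∈ Finset.Icc (fun _ => -((n : ℤ) - 1)) (fun _ => (n : ℤ) - 1),
      ∫ ω, |rhat j ω - rtil j ω|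
        ≤ E2 + 2 * (n : ℝ) ^ (-(d : ℝ) / 2) * Real.sqrt (c * E2))
    ∧ (∑ j ∈ Finset.Icc (fun _ => -((q : ℤ) - 1)) (fun _ => (q : ℤ) - 1),
        ∫ ω, |rhat j ω - rtil j ω|)
      ≤ (2 * (q : ℝ) - 1) ^ d *
        (E2 + 2 * (n : ℝ) ^ (-(d : ℝ) / 2) * Real.sqrt (c * E2)) := by
  have hn : 1 ≤ n := hq.trans hqn
  have hn0 : (0:ℝ) < (n:ℝ) := by exact_mod_cast Nat.lt_of_lt_of_le Nat.zero_lt_one hn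
  have hnd : (0:ℝ) < (n:ℝ) ^ d := pow_pos hn0 d
  have hnZ : (1:ℤ) ≤ (n:ℤ) := by exact_mod_cast hn
  -- measurability of sums
  have hSmeas : ∀ S : Finset (Fin d → ℤ), Measurable (fun ω => ∑ k ∈ S, (X k ω - μ)) :=
    fun S => Finset.measurable_sum S fun k _ => (hmeas k).sub measurable_const
  have hXbarmeas : Measurable Xbar := by
    have : Xbar = fun ω =>
        (∑ k ∈ Finset.Icc (1 : Fin d → ℤ) (fun _ => (n : ℤ)), X k ω) / (n : ℝ) ^ d :=
      funext hXbar
    rw [this]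
    exact (Finset.measurable_sum _ fun k _ => hmeas k).div_const _
  -- integrability of products of sums
  have hintS : ∀ S T : Finset (Fin d → ℤ),
      Integrable (fun ω => (∑ k ∈ S, (X k ω - μ)) * (∑ k ∈ T, (X k ω - μ))) := by
    intro S T
    have h : (fun ω => (∑ k ∈ S, (X k ω - μ)) * (∑ k ∈ T, (X k ω - μ)))
        = fun ω => ∑ k ∈ S, ∑ k' ∈ T, (X k ω - μ) * (X k' ω - μ) := by
      funext ω; rw [Finset.sum_mul_sum]
    rw [h]
    exact integrable_finset_sum _ fun k _ => integrable_finset_sum _ fun k' _ => hint k k'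
  -- cardinality of A
  set A : Finset (Fin d → ℤ) := Finset.Icc 1 (fun _ => (n:ℤ)) with hAdef
  have hcardA : (A.card : ℝ) = (n:ℝ) ^ d := by
    have h1 : A.card = n ^ d := by
      rw [hAdef, Pi.card_Icc]
      have he : ∀ i : Fin d,
          (Finset.Icc ((1 : Fin d → ℤ) i) ((fun _ => (n:ℤ)) i)).card = n := by
        intro i
        simp only [Pi.one_apply, Int.card_Icc]
        omega
      rw [Finset.prod_congr rfl fun i _ => he i]
      simp
    rw [h1]; push_cast; ring
  -- the sample mean recentred
  have hu : ∀ ω, Xbar ω - μ = (∑ k ∈ A, (X k ω - μ)) / (n:ℝ) ^ d := by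
    intro ω
    have h : ∑ k ∈ A, (X k ω - μ) = (∑ k ∈ A, X k ω) - (n:ℝ) ^ d * μ := by
      rw [Finset.sum_sub_distrib, Finset.sum_const, nsmul_eq_mul, hcardA]
    rw [hXbar ω, h, sub_div, mul_div_cancel_left₀ _ hnd.ne']
  -- integrability facts about u
  have hintu2 : Integrable (fun ω => (Xbar ω - μ) ^ 2) := by
    have h : (fun ω => (Xbar ω - μ) ^ 2)
        = fun ω => (((n:ℝ) ^ d)⁻¹ * ((n:ℝ) ^ d)⁻¹) *
            ((∑ k ∈ A, (X k ω - μ)) * (∑ k ∈ A, (X k ω - μ))) := by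
      funext ω; rw [hu ω]; ring
    rw [h]; exact (hintS A A).const_mul _
  have hintuS : ∀ S : Finset (Fin d → ℤ),
      Integrable (fun ω => (Xbar ω - μ) * ∑ k ∈ S, (X k ω - μ)) := by
    intro S
    have h : (fun ω => (Xbar ω - μ) * ∑ k ∈ S, (X k ω - μ))
        = fun ω => ((n:ℝ) ^ d)⁻¹ *
            ((∑ k ∈ A, (X k ω - μ)) * ∑ k ∈ S, (X k ω - μ)) := by
      funext ω; rw [hu ω]; ring
    rw [h]; exact (hintS A S).const_mul _
  have hE2nonneg : 0 ≤ E2 := hE2 ▸ integral_nonneg fun ω => sq_nonneg _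
  -- rewriting helpers for rpow
  have hsqrtnd : Real.sqrt ((n:ℝ) ^ d) = (n:ℝ) ^ ((d:ℝ)/2) := by
    rw [Real.sqrt_eq_rpow, ← Real.rpow_natCast (n:ℝ) d, ← Real.rpow_mul hn0.le]
    congr 1; ring
  have hdivnd : (n:ℝ) ^ ((d:ℝ)/2) / (n:ℝ) ^ d = (n:ℝ) ^ (-(d:ℝ)/2) := by
    rw [← Real.rpow_natCast (n:ℝ) d, ← Real.rpow_sub hn0]
    congr 1; ring
  -- the main per-j bound
  have key : ∀ j ∈ Finset.Icc (fun _ => -((n : ℤ) - 1)) (fun _ => (n : ℤ) - 1),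
      ∫ ω, |rhat j ω - rtil j ω|
        ≤ E2 + 2 * (n : ℝ) ^ (-(d : ℝ) / 2) * Real.sqrt (c * E2) := by
    intro j hj
    have hjbound : ∀ i, |j i| ≤ (n:ℤ) - 1 := by
      intro i
      rcases Finset.mem_Icc.1 hj with ⟨h1, h2⟩
      exact abs_le.2 ⟨h1 i, h2 i⟩
    set S : Finset (Fin d → ℤ) := Finset.Icc 1 (fun i => (n:ℤ) - |j i|) with hSdef
    set S' : Finset (Fin d → ℤ) :=
      Finset.Icc ((1 : Fin d → ℤ) + fun i => |j i|)
        ((fun i => (n:ℤ) - |j i|) + fun i => |j i|) with hS'def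
    -- reindexing of the shifted sum
    have hTeq : ∀ ω, (∑ k ∈ S, (X (k + fun i => |j i|) ω - μ))
        = ∑ k ∈ S', (X k ω - μ) := by
      intro ω
      rw [hS'def, ← Finset.map_add_right_Icc, Finset.sum_map]
      rfl
    have hprodle : ∀ f : Fin d → ℤ, (∀ i, 0 ≤ f i) → (∀ i, f i ≤ (n:ℤ)) →
        (∏ i, ((f i : ℤ) : ℝ)) ≤ (n:ℝ) ^ d := by
      intro f h0 h1
      calc (∏ i, ((f i : ℤ) : ℝ)) ≤ ∏ _i : Fin d, (n:ℝ) := by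
            refine Finset.prod_le_prod (fun i _ => ?_) (fun i _ => ?_)
            · exact_mod_cast h0 i
            · exact_mod_cast h1 i
        _ = (n:ℝ) ^ d := by simp
    -- cardinality bound for S
    have hScard : (S.card : ℝ) ≤ (n:ℝ) ^ d := by
      have hcard : (S.card : ℤ) = ∏ i, ((n:ℤ) - |j i|) := by
        rw [hSdef, Pi.card_Icc, Nat.cast_prod]
        refine Finset.prod_congr rfl fun i _ => ?_
        have h0 := hjbound i
        have h0' := abs_nonneg (j i)
        simp only [Pi.one_apply, Int.card_Icc]
        omega
      have hc' : (S.card : ℝ) = ∏ i, (((n:ℤ) - |j i| : ℤ) : ℝ) := by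
        exact_mod_cast hcard
      rw [hc']
      exact hprodle _ (fun i => by have := hjbound i; have := abs_nonneg (j i); omega)
        (fun i => by have := abs_nonneg (j i); omega)
    -- second-moment bounds from the rectangle hypothesis
    have hS2 : ∫ ω, (∑ k ∈ S, (X k ω - μ)) ^ 2 ≤ c * (n:ℝ) ^ d := by
      have hle : (1 : Fin d → ℤ) ≤ fun i => (n:ℤ) - |j i| := by
        intro i
        show (1 : Fin d → ℤ) i ≤ (n:ℤ) - |j i|
        rw [Pi.one_apply]
        have := hjbound i; omega
      rw [hSdef]
      refine (hrect 1 (fun i => (n:ℤ) - |j i|) hle).trans ?_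
      refine mul_le_mul_of_nonneg_left ?_ hc
      have he : ∀ i : Fin d, (((fun i => (n:ℤ) - |j i|) i - (1 : Fin d → ℤ) i + 1 : ℤ) : ℝ)
          = (((n:ℤ) - |j i| : ℤ) : ℝ) := by
        intro i; rw [Pi.one_apply]; push_cast; ring
      rw [Finset.prod_congr rfl fun i _ => he i]
      exact hprodle _ (fun i => by have := hjbound i; have := abs_nonneg (j i); omega)
        (fun i => by have := abs_nonneg (j i); omega)
    have hS'2 : ∫ ω, (∑ k ∈ S', (X k ω - μ)) ^ 2 ≤ c * (n:ℝ) ^ d := by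
      have hle : ((1 : Fin d → ℤ) + fun i => |j i|)
          ≤ ((fun i => (n:ℤ) - |j i|) + fun i => |j i|) := by
        intro i
        show (1 : Fin d → ℤ) i + |j i| ≤ ((n:ℤ) - |j i|) + |j i|
        rw [Pi.one_apply]
        have := hjbound i; omega
      rw [hS'def]
      refine (hrect _ _ hle).trans ?_
      refine mul_le_mul_of_nonneg_left ?_ hc
      have he : ∀ i : Fin d,
          ((((fun i => (n:ℤ) - |j i|) + fun i => |j i|) i
            - ((1 : Fin d → ℤ) + fun i => |j i|) i + 1 : ℤ) : ℝ)
          = (((n:ℤ) - |j i| : ℤ) : ℝ) := by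
        intro i
        show ((((n:ℤ) - |j i|) + |j i| - ((1 : Fin d → ℤ) i + |j i|) + 1 : ℤ) : ℝ) = _
        rw [Pi.one_apply]; push_cast; ring
      rw [Finset.prod_congr rfl fun i _ => he i]
      exact hprodle _ (fun i => by have := hjbound i; have := abs_nonneg (j i); omega)
        (fun i => by have := abs_nonneg (j i); omega)
    -- the pointwise identity
    have hid : ∀ ω, rhat j ω - rtil j ω =
        ((S.card : ℝ) * (Xbar ω - μ) ^ 2
          - (Xbar ω - μ) * ((∑ k ∈ S, (X k ω - μ)) + ∑ k ∈ S', (X k ω - μ))) / (n:ℝ) ^ d := by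
      intro ω
      rw [hrhat, hrtil, div_sub_div_same]
      congr 1
      rw [← Finset.sum_sub_distrib]
      rw [Finset.sum_congr rfl (fun k _ =>
        show (X k ω - Xbar ω) * (X (k + fun i => |j i|) ω - Xbar ω)
            - (X k ω - μ) * (X (k + fun i => |j i|) ω - μ)
          = (Xbar ω - μ) ^ 2
            - (Xbar ω - μ) * ((X k ω - μ) + (X (k + fun i => |j i|) ω - μ)) from by ring)]
      rw [Finset.sum_sub_distrib, Finset.sum_const, nsmul_eq_mul, ← Finset.mul_sum,
        Finset.sum_add_distrib, hTeq ω]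
    -- integrability of everything involved
    have hintL : Integrable (fun ω => rhat j ω - rtil j ω) := by
      have h : (fun ω => rhat j ω - rtil j ω)
          = fun ω => ((S.card : ℝ) * (Xbar ω - μ) ^ 2
            - (Xbar ω - μ) * ((∑ k ∈ S, (X k ω - μ)) + ∑ k ∈ S', (X k ω - μ))) / (n:ℝ) ^ d :=
        funext hid
      rw [h]
      refine Integrable.div_const ?_ _
      refine (hintu2.const_mul _).sub ?_
      have := (hintuS S).add (hintuS S')
      simpa [mul_add, Pi.add_def] using this
    -- pointwise bound
    have hptw : ∀ ω, |rhat j ω - rtil j ω| ≤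
        (Xbar ω - μ) ^ 2 +
          (|(Xbar ω - μ) * ∑ k ∈ S, (X k ω - μ)|
            + |(Xbar ω - μ) * ∑ k ∈ S', (X k ω - μ)|) / (n:ℝ) ^ d := by
      intro ω
      rw [hid ω, abs_div, abs_of_pos hnd]
      have hnum : |(S.card : ℝ) * (Xbar ω - μ) ^ 2
            - (Xbar ω - μ) * ((∑ k ∈ S, (X k ω - μ)) + ∑ k ∈ S', (X k ω - μ))|
          ≤ (n:ℝ) ^ d * (Xbar ω - μ) ^ 2 +
            (|(Xbar ω - μ) * ∑ k ∈ S, (X k ω - μ)|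
              + |(Xbar ω - μ) * ∑ k ∈ S', (X k ω - μ)|) := by
        refine (abs_sub _ _).trans ?_
        refine add_le_add ?_ ?_
        · rw [abs_mul, abs_of_nonneg (by positivity : (0:ℝ) ≤ (S.card:ℝ)), abs_of_nonneg (sq_nonneg _)]
          exact mul_le_mul_of_nonneg_right hScard (sq_nonneg _)
        · rw [mul_add]
          exact abs_add_le _ _
      calc |(S.card : ℝ) * (Xbar ω - μ) ^ 2
            - (Xbar ω - μ) * ((∑ k ∈ S, (X k ω - μ)) + ∑ k ∈ S', (X k ω - μ))| / (n:ℝ) ^ d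
          ≤ ((n:ℝ) ^ d * (Xbar ω - μ) ^ 2 +
              (|(Xbar ω - μ) * ∑ k ∈ S, (X k ω - μ)|
                + |(Xbar ω - μ) * ∑ k ∈ S', (X k ω - μ)|)) / (n:ℝ) ^ d := by
            gcongr
        _ = (Xbar ω - μ) ^ 2 +
              (|(Xbar ω - μ) * ∑ k ∈ S, (X k ω - μ)|
                + |(Xbar ω - μ) * ∑ k ∈ S', (X k ω - μ)|) / (n:ℝ) ^ d := by
            rw [add_div, mul_div_cancel_left₀ _ hnd.ne']
    -- Cauchy–Schwarz bounds
    have hintSq : ∀ T : Finset (Fin d → ℤ),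
        Integrable (fun ω => (∑ k ∈ T, (X k ω - μ)) ^ 2) := by
      intro T
      have := hintS T T
      simpa [pow_two] using this
    have hCS : ∀ T : Finset (Fin d → ℤ),
        (∫ ω, (∑ k ∈ T, (X k ω - μ)) ^ 2 ≤ c * (n:ℝ) ^ d) →
        ∫ ω, |(Xbar ω - μ) * ∑ k ∈ T, (X k ω - μ)|
          ≤ Real.sqrt E2 * Real.sqrt (c * (n:ℝ) ^ d) := by
      intro T hT
      have h := cs_abs (f := fun ω => Xbar ω - μ) (g := fun ω => ∑ k ∈ T, (X k ω - μ))
        (hXbarmeas.sub measurable_const) (hSmeas T) hintu2 (hintSq T)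
      refine h.trans ?_
      rw [← hE2]
      exact mul_le_mul_of_nonneg_left (Real.sqrt_le_sqrt hT) (Real.sqrt_nonneg _)
    -- put the integral bound together
    have hintR : Integrable (fun ω => (Xbar ω - μ) ^ 2 +
        (|(Xbar ω - μ) * ∑ k ∈ S, (X k ω - μ)|
          + |(Xbar ω - μ) * ∑ k ∈ S', (X k ω - μ)|) / (n:ℝ) ^ d) :=
      hintu2.add (((hintuS S).abs.add (hintuS S').abs).div_const _)
    have hmono : ∫ ω, |rhat j ω - rtil j ω|
        ≤ ∫ ω, ((Xbar ω - μ) ^ 2 +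
          (|(Xbar ω - μ) * ∑ k ∈ S, (X k ω - μ)|
            + |(Xbar ω - μ) * ∑ k ∈ S', (X k ω - μ)|) / (n:ℝ) ^ d) :=
      integral_mono hintL.abs hintR hptw
    have hsplit : ∫ ω, ((Xbar ω - μ) ^ 2 +
          (|(Xbar ω - μ) * ∑ k ∈ S, (X k ω - μ)|
            + |(Xbar ω - μ) * ∑ k ∈ S', (X k ω - μ)|) / (n:ℝ) ^ d)
        = E2 + ((∫ ω, |(Xbar ω - μ) * ∑ k ∈ S, (X k ω - μ)|)
            + ∫ ω, |(Xbar ω - μ) * ∑ k ∈ S', (X k ω - μ)|) / (n:ℝ) ^ d := by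
      have h1 : Integrable (fun ω => |(Xbar ω - μ) * ∑ k ∈ S, (X k ω - μ)|
          + |(Xbar ω - μ) * ∑ k ∈ S', (X k ω - μ)|) := (hintuS S).abs.add (hintuS S').abs
      have h2 : Integrable (fun ω => (|(Xbar ω - μ) * ∑ k ∈ S, (X k ω - μ)|
          + |(Xbar ω - μ) * ∑ k ∈ S', (X k ω - μ)|) / (n:ℝ) ^ d) := h1.div_const _
      have h3 : Integrable (fun ω => |(Xbar ω - μ) * ∑ k ∈ S, (X k ω - μ)|) := (hintuS S).abs
      have h4 : Integrable (fun ω => |(Xbar ω - μ) * ∑ k ∈ S', (X k ω - μ)|) := (hintuS S').abs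
      rw [integral_add hintu2 h2, integral_div, integral_add h3 h4, ← hE2]
    have hfinal : E2 + ((Real.sqrt E2 * Real.sqrt (c * (n:ℝ) ^ d))
          + Real.sqrt E2 * Real.sqrt (c * (n:ℝ) ^ d)) / (n:ℝ) ^ d
        = E2 + 2 * (n : ℝ) ^ (-(d : ℝ) / 2) * Real.sqrt (c * E2) := by
      have h1 : Real.sqrt E2 * Real.sqrt (c * (n:ℝ) ^ d)
          = Real.sqrt (c * E2) * (n:ℝ) ^ ((d:ℝ)/2) := by
        rw [← Real.sqrt_mul hE2nonneg,
          show E2 * (c * (n:ℝ) ^ d) = (c * E2) * (n:ℝ) ^ d from by ring,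
          Real.sqrt_mul (by positivity), hsqrtnd]
      rw [h1, show (Real.sqrt (c * E2) * (n:ℝ) ^ ((d:ℝ)/2)
          + Real.sqrt (c * E2) * (n:ℝ) ^ ((d:ℝ)/2)) / (n:ℝ) ^ d
        = 2 * ((n:ℝ) ^ ((d:ℝ)/2) / (n:ℝ) ^ d) * Real.sqrt (c * E2) from by ring, hdivnd]
    calc ∫ ω, |rhat j ω - rtil j ω|
        ≤ E2 + ((∫ ω, |(Xbar ω - μ) * ∑ k ∈ S, (X k ω - μ)|)
            + ∫ ω, |(Xbar ω - μ) * ∑ k ∈ S', (X k ω - μ)|) / (n:ℝ) ^ d := by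
          rw [← hsplit]; exact hmono
      _ ≤ E2 + ((Real.sqrt E2 * Real.sqrt (c * (n:ℝ) ^ d))
            + Real.sqrt E2 * Real.sqrt (c * (n:ℝ) ^ d)) / (n:ℝ) ^ d := by
          gcongr
          · exact hCS S hS2
          · exact hCS S' hS'2
      _ = E2 + 2 * (n : ℝ) ^ (-(d : ℝ) / 2) * Real.sqrt (c * E2) := hfinal
  refine ⟨key, ?_⟩
  -- the sum over B_{q-1}
  set B : Finset (Fin d → ℤ) :=
    Finset.Icc (fun _ => -((q : ℤ) - 1)) (fun _ => (q : ℤ) - 1) with hBdef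
  have hqZ : (1:ℤ) ≤ (q:ℤ) := by exact_mod_cast hq
  have hqnZ : (q:ℤ) ≤ (n:ℤ) := by exact_mod_cast hqn
  have hsub : B ⊆ Finset.Icc (fun _ => -((n : ℤ) - 1)) (fun _ => (n : ℤ) - 1) := by
    rw [hBdef]
    refine Finset.Icc_subset_Icc (fun i => ?_) (fun i => ?_)
    · show -((n:ℤ) - 1) ≤ -((q:ℤ) - 1)
      omega
    · show (q:ℤ) - 1 ≤ (n:ℤ) - 1
      omega
  have hcardB : (B.card : ℝ) = (2 * (q:ℝ) - 1) ^ d := by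
    have h1 : (B.card : ℤ) = (2 * (q:ℤ) - 1) ^ d := by
      rw [hBdef, Pi.card_Icc, Nat.cast_prod]
      have he : ∀ i : Fin d,
          ((Finset.Icc ((fun _ => -((q:ℤ) - 1)) i) ((fun _ => (q:ℤ) - 1) i)).card : ℤ)
            = 2 * (q:ℤ) - 1 := by
        intro i
        simp only [Int.card_Icc]
        omega
      rw [Finset.prod_congr rfl fun i _ => he i]
      simp
    calc (B.card : ℝ) = (((B.card : ℤ)) : ℝ) := by norm_cast
      _ = (2 * (q:ℝ) - 1) ^ d := by rw [h1]; push_cast; ring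
  have hsum := Finset.sum_le_card_nsmul B (fun j => ∫ ω, |rhat j ω - rtil j ω|)
    (E2 + 2 * (n : ℝ) ^ (-(d : ℝ) / 2) * Real.sqrt (c * E2))
    (fun j hj => key j (hsub hj))
  rw [nsmul_eq_mul] at hsum
  calc (∑ j ∈ B, ∫ ω, |rhat j ω - rtil j ω|)
      ≤ (B.card : ℝ) * (E2 + 2 * (n : ℝ) ^ (-(d : ℝ) / 2) * Real.sqrt (c * E2)) := hsum
    _ = (2 * (q:ℝ) - 1) ^ d *
        (E2 + 2 * (n : ℝ) ^ (-(d : ℝ) / 2) * Real.sqrt (c * E2)) := by rw [hcardB]
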